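/- Let K_ε = [[1−q, q],[q, 1−q]] with q = 1/(e^ε+1), ε > 0. Then K_ε is invertible with K_ε^{-1} = (1−2q)^{-1} [[1−q, −q],[−q, 1−q]], and for ε₁, ε₂ > 0 the 2×2 stochastic matrices satisfy: the matrix K^{merge} = (K_{ε₁}^{-1} ⊗ K_{ε₂}^{-1}) K^{or} K_{ε*} has all entries in [0,1] and rows summing to 1, where K^{or} is the 4×2 matrix sending (0,0) to column 0 and (0,1),(1,0),(1,1) to column 1, and ε* = −log(e^{−ε₁}+e^{−ε₂}−e^{−(ε₁+ε₂)}). -/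

import Mathlib

open Real Matrix Kronecker

set_option maxHeartbeats 1000000

/-- Transition matrix of symmetric randomized response with budget `ε`. -/
noncomputable def Kmat (ε : ℝ) : Matrix (Fin 2) (Fin 2) ℝ :=
  !![1 - 1 / (Real.exp ε + 1), 1 / (Real.exp ε + 1);
     1 / (Real.exp ε + 1), 1 - 1 / (Real.exp ε + 1)]

/-- Claimed inverse of `Kmat ε`. -/
noncomputable def KmatInv (ε : ℝ) : Matrix (Fin 2) (Fin 2) ℝ :=
  (1 - 2 * (1 / (Real.exp ε + 1)))⁻¹ •
    !![1 - 1 / (Real.exp ε + 1), -(1 / (Real.exp ε + 1));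
       -(1 / (Real.exp ε + 1)), 1 - 1 / (Real.exp ε + 1)]

/-- Deterministic transition matrix of the bitwise `or` operation. -/
def Kor : Matrix (Fin 2 × Fin 2) (Fin 2) ℝ :=
  fun i j => if i = (0, 0) then (if j = 0 then 1 else 0) else (if j = 1 then 1 else 0)

lemma aux_exp_gt (ε : ℝ) (hε : 0 < ε) : 1 < Real.exp ε := by
  rw [show (1:ℝ) = Real.exp 0 by simp]; exact Real.exp_lt_exp.2 hε

lemma aux_inv_eq (ε : ℝ) (hε : 0 < ε) :
    KmatInv ε = (Real.exp ε - 1)⁻¹ • !![Real.exp ε, -1; -1, Real.exp ε] := by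
  have hx := aux_exp_gt ε hε
  have h1 : Real.exp ε + 1 ≠ 0 := by linarith
  have h2 : Real.exp ε - 1 ≠ 0 := by intro h; nlinarith [sub_eq_zero.1 h]
  ext i j
  fin_cases i <;> fin_cases j <;>
  · simp [KmatInv]
    rw [show 1 - 2 * (Real.exp ε + 1)⁻¹ = (Real.exp ε - 1) / (Real.exp ε + 1) by
      field_simp; ring]
    rw [inv_div]
    field_simp
    try ring

lemma aux_inv (ε : ℝ) (hε : 0 < ε) :
    Kmat ε * KmatInv ε = 1 ∧ KmatInv ε * Kmat ε = 1 := by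
  have hx := aux_exp_gt ε hε
  have h1 : Real.exp ε + 1 ≠ 0 := by linarith
  have h2 : Real.exp ε - 1 ≠ 0 := by intro h; nlinarith [sub_eq_zero.1 h]
  rw [aux_inv_eq ε hε]
  constructor <;>
  · ext i j
    fin_cases i <;> fin_cases j <;>
    · simp [Kmat, Matrix.mul_apply, Fin.sum_univ_succ, Matrix.one_apply]
      field_simp
      try ring

lemma aux_merge (ε₁ ε₂ : ℝ) (h₁ : 0 < ε₁) (h₂ : 0 < ε₂) :
    (∀ i j, 0 ≤ ((KmatInv ε₁ ⊗ₖ KmatInv ε₂) * Kor *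
        Kmat (-Real.log (Real.exp (-ε₁) + Real.exp (-ε₂) - Real.exp (-(ε₁ + ε₂))))) i j ∧
      ((KmatInv ε₁ ⊗ₖ KmatInv ε₂) * Kor *
        Kmat (-Real.log (Real.exp (-ε₁) + Real.exp (-ε₂) - Real.exp (-(ε₁ + ε₂))))) i j ≤ 1) ∧
    (∀ i, ∑ j, ((KmatInv ε₁ ⊗ₖ KmatInv ε₂) * Kor *
        Kmat (-Real.log (Real.exp (-ε₁) + Real.exp (-ε₂) - Real.exp (-(ε₁ + ε₂))))) i j = 1) := by
  have ha : 1 < Real.exp ε₁ := aux_exp_gt ε₁ h₁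
  have hb : 1 < Real.exp ε₂ := aux_exp_gt ε₂ h₂
  obtain ⟨a, ha'⟩ : ∃ a, Real.exp ε₁ = a := ⟨_, rfl⟩
  obtain ⟨b, hb'⟩ : ∃ b, Real.exp ε₂ = b := ⟨_, rfl⟩
  rw [ha'] at ha
  rw [hb'] at hb
  have hab : 0 < a * b := by nlinarith
  have habp : 0 < a + b - 1 := by linarith
  have hE : 0 < a * b + a + b - 1 := by nlinarith
  have ht : Real.exp (-ε₁) + Real.exp (-ε₂) - Real.exp (-(ε₁ + ε₂)) = (a + b - 1) / (a * b) := by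
    rw [Real.exp_neg, Real.exp_neg, Real.exp_neg, Real.exp_add, ha', hb']
    field_simp
    ring
  have hs : Real.exp (-Real.log (Real.exp (-ε₁) + Real.exp (-ε₂) - Real.exp (-(ε₁ + ε₂))))
      = a * b / (a + b - 1) := by
    rw [ht, Real.exp_neg, Real.exp_log (by positivity), inv_div]
  generalize hgen : -Real.log (Real.exp (-ε₁) + Real.exp (-ε₂) - Real.exp (-(ε₁ + ε₂))) = s at hs ⊢
  have hq : a * b / (a + b - 1) + 1 ≠ 0 := by positivity
  have hKs : Kmat s
      = !![a * b / (a * b + a + b - 1), (a + b - 1) / (a * b + a + b - 1);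
           (a + b - 1) / (a * b + a + b - 1), a * b / (a * b + a + b - 1)] := by
    ext i j
    fin_cases i <;> fin_cases j <;>
    · simp [Kmat, hs]
      rw [show a * b / (a + b - 1) + 1 = (a * b + a + b - 1) / (a + b - 1) by
            field_simp; ring, inv_div]
      try (field_simp [hE.ne', show a * (b + 1) + b - 1 ≠ 0 by nlinarith])
      try ring
  have hA := aux_inv_eq ε₁ h₁
  have hB := aux_inv_eq ε₂ h₂
  rw [ha'] at hA
  rw [hb'] at hB
  have h3 : a - 1 ≠ 0 := by intro h; nlinarith [sub_eq_zero.1 h]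
  have h4 : b - 1 ≠ 0 := by intro h; nlinarith [sub_eq_zero.1 h]
  set M := (KmatInv ε₁ ⊗ₖ KmatInv ε₂) * Kor * Kmat s with hM
  have key : ∀ i k j, M (i, k) j =
      ![![![1, 0], ![(b - 1) / (a * b + a + b - 1), (a * b + a) / (a * b + a + b - 1)]],
        ![![(a - 1) / (a * b + a + b - 1), (a * b + b) / (a * b + a + b - 1)],
          ![(a + b) / (a * b + a + b - 1), (a * b - 1) / (a * b + a + b - 1)]]] i k j := by
    intro i k j
    fin_cases i <;> fin_cases k <;> fin_cases j <;>
    · simp [hM, hA, hB, hKs, Kor, Matrix.mul_apply, Fin.sum_univ_succ,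
        Fintype.sum_prod_type, Matrix.kroneckerMap_apply]
      field_simp [show a * (b + 1) + b - 1 ≠ 0 by nlinarith]
      try ring
  constructor
  · rintro ⟨i, k⟩ j
    rw [key]
    fin_cases i <;> fin_cases k <;> fin_cases j <;> simp <;>
      first
        | (constructor <;>
            first
              | (apply div_nonneg _ hE.le; nlinarith)
              | (rw [div_le_one hE]; nlinarith))
        | (constructor <;> norm_num)
  · rintro ⟨i, k⟩
    rw [Fin.sum_univ_two, key, key]
    fin_cases i <;> fin_cases k <;> simp <;>
      first
        | (rw [← add_div, div_eq_one_iff_eq hE.ne']; ring)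
        | norm_num

theorem stmt16 (ε₁ ε₂ : ℝ) (h₁ : 0 < ε₁) (h₂ : 0 < ε₂) :
    (∀ ε : ℝ, 0 < ε → Kmat ε * KmatInv ε = 1 ∧ KmatInv ε * Kmat ε = 1) ∧
    (let εs : ℝ := -Real.log (Real.exp (-ε₁) + Real.exp (-ε₂) - Real.exp (-(ε₁ + ε₂)))
     let Kmerge : Matrix (Fin 2 × Fin 2) (Fin 2) ℝ :=
       (KmatInv ε₁ ⊗ₖ KmatInv ε₂) * Kor * Kmat εs
     (∀ i j, 0 ≤ Kmerge i j ∧ Kmerge i j ≤ 1) ∧ (∀ i, ∑ j, Kmerge i j = 1)) := by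
  exact ⟨fun ε hε => aux_inv ε hε, aux_merge ε₁ ε₂ h₁ h₂⟩
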